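/- Let λ > 0, c > 1 and c̄ = (c+1)/(c−1). Suppose λ/n ≥ c·‖∇Λ(η₀)‖_∞ and let η̂ be a global minimizer over ℝ^p of η ↦ Λ(η) + (λ/n)·‖η‖₁. Then δ = η̂ − η₀ satisfies ‖δ_{T^c}‖₁ ≤ c̄·‖δ_T‖₁, i.e. η̂ − η₀ ∈ Δ_c̄. -/

import Mathlib

open Finset

/-- The logistic link function `G(t) = exp t / (1 + exp t)`. -/
noncomputable def logistic (t : ℝ) : ℝ := Real.exp t / (1 + Real.exp t)

/-- Inner product `x_i'η` of the `i`-th design vector with `η`. -/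
def xdot {n p : ℕ} (x : Fin n → Fin p → ℝ) (η : Fin p → ℝ) (i : Fin n) : ℝ :=
  ∑ j, x i j * η j

/-- Average logistic negative log-likelihood
`Λ(η) = (1/n)∑ᵢ [log(1+exp(x_i'η)) − y_i·(x_i'η)]`. -/
noncomputable def Lam {n p : ℕ} (x : Fin n → Fin p → ℝ) (y : Fin n → ℝ)
    (η : Fin p → ℝ) : ℝ :=
  (1 / (n : ℝ)) * ∑ i, (Real.log (1 + Real.exp (xdot x η i)) - y i * xdot x η i)

/-- Gradient of `Λ`: `∇Λ(η) = (1/n)∑ᵢ (G(x_i'η) − y_i)·x_i`. -/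
noncomputable def gradLam {n p : ℕ} (x : Fin n → Fin p → ℝ) (y : Fin n → ℝ)
    (η : Fin p → ℝ) (j : Fin p) : ℝ :=
  (1 / (n : ℝ)) * ∑ i, (logistic (xdot x η i) - y i) * x i j

/-- Sup-norm `‖∇Λ(η)‖_∞` of the gradient of `Λ`. -/
noncomputable def gradLamSup {n p : ℕ} (x : Fin n → Fin p → ℝ) (y : Fin n → ℝ)
    (η : Fin p → ℝ) : ℝ :=
  ⨆ j : Fin p, |gradLam x y η j|

/-- The logistic weights `w_i = G(x_i'η₀)·(1 − G(x_i'η₀))`. -/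
noncomputable def wgt {n p : ℕ} (x : Fin n → Fin p → ℝ) (η₀ : Fin p → ℝ) (i : Fin n) : ℝ :=
  logistic (xdot x η₀ i) * (1 - logistic (xdot x η₀ i))

/-- Weighted prediction norm `‖√w_i·x_i'δ‖_{2,n} = ((1/n)∑ᵢ w_i (x_i'δ)²)^{1/2}`. -/
noncomputable def predNorm {n p : ℕ} (x : Fin n → Fin p → ℝ) (w : Fin n → ℝ)
    (δ : Fin p → ℝ) : ℝ :=
  Real.sqrt ((1 / (n : ℝ)) * ∑ i, w i * xdot x δ i ^ 2)

/-- Support of a coefficient vector. -/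
noncomputable def supp {p : ℕ} (η : Fin p → ℝ) : Finset (Fin p) :=
  Finset.univ.filter (fun j => η j ≠ 0)

/-- ℓ1 norm of a vector in `ℝ^p`. -/
def l1norm {p : ℕ} (δ : Fin p → ℝ) : ℝ := ∑ j, |δ j|

/-- The restricted cone `Δ_c̄ = {δ : ‖δ_{T^c}‖₁ ≤ c̄·‖δ_T‖₁}` for a support set `T`. -/
noncomputable def inCone {p : ℕ} (T : Finset (Fin p)) (cbar : ℝ) (δ : Fin p → ℝ) : Prop :=
  ∑ j ∈ Tᶜ, |δ j| ≤ cbar * ∑ j ∈ T, |δ j|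

/-- Cone containment for the ℓ1-penalized logistic regression estimator: if
`λ/n ≥ c·‖∇Λ(η₀)‖_∞` with `c > 1`, then any global minimizer `η̂` of
`η ↦ Λ(η) + (λ/n)‖η‖₁` satisfies `‖(η̂−η₀)_{T^c}‖₁ ≤ c̄·‖(η̂−η₀)_T‖₁`
where `c̄ = (c+1)/(c−1)` and `T = support(η₀)`. -/
lemma logistic_mono : Monotone logistic := by
  intro a b hab
  unfold logistic
  have ha := Real.exp_pos a
  have hb := Real.exp_pos b
  rw [div_le_div_iff₀ (by positivity) (by positivity)]
  nlinarith [Real.exp_le_exp.2 hab]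

lemma softplus_hasDerivAt (t : ℝ) :
    HasDerivAt (fun t => Real.log (1 + Real.exp t)) (logistic t) t := by
  have h1 : HasDerivAt (fun t => 1 + Real.exp t) (Real.exp t) t :=
    (Real.hasDerivAt_exp t).const_add 1
  have h2 := h1.log (by positivity)
  simpa [logistic] using h2

lemma softplus_tangent (a b : ℝ) :
    Real.log (1 + Real.exp a) + logistic a * (b - a) ≤ Real.log (1 + Real.exp b) := by
  set F := fun t => Real.log (1 + Real.exp t) - logistic a * t with hFdef
  have hF : ∀ t, HasDerivAt F (logistic t - logistic a) t := by
    intro t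
    have := (softplus_hasDerivAt t).sub ((hasDerivAt_id t).const_mul (logistic a))
    rw [mul_one] at this
    exact this
  have hcont : Continuous F := by
    have : Differentiable ℝ F := fun t => (hF t).differentiableAt
    exact this.continuous
  have hFd : ∀ t, deriv F t = logistic t - logistic a := fun t => (hF t).deriv
  have hab : F a ≤ F b := by
    rcases le_total a b with h | h
    · have hmono : MonotoneOn F (Set.Ici a) := by
        apply monotoneOn_of_deriv_nonneg (convex_Ici a) hcont.continuousOn
        · intro t _; exact (hF t).differentiableAt.differentiableWithinAt
        · intro t ht
          rw [hFd]
          have : a ≤ t := le_of_lt (by simpa using ht)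
          linarith [logistic_mono this]
      exact hmono Set.self_mem_Ici h h
    · have hm : AntitoneOn F (Set.Iic a) := by
        apply antitoneOn_of_deriv_nonpos (convex_Iic a) hcont.continuousOn
        · intro t _; exact (hF t).differentiableAt.differentiableWithinAt
        · intro t ht
          rw [hFd]
          have : t ≤ a := le_of_lt (by simpa using ht)
          linarith [logistic_mono this]
      exact hm h Set.self_mem_Iic h
  simp only [hFdef] at hab
  nlinarith [hab]

theorem lasso_logistic_cone {n p : ℕ} (hn : 0 < n) (hp : 0 < p)
    (x : Fin n → Fin p → ℝ) (y : Fin n → ℝ) (hy : ∀ i, y i = 0 ∨ y i = 1)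
    (η₀ : Fin p → ℝ) (hs : 1 ≤ (supp η₀).card)
    (lam c : ℝ) (hlam : 0 < lam) (hc : 1 < c)
    (hpen : c * gradLamSup x y η₀ ≤ lam / (n : ℝ))
    (ηhat : Fin p → ℝ)
    (hmin : ∀ η : Fin p → ℝ,
      Lam x y ηhat + (lam / (n : ℝ)) * l1norm ηhat
        ≤ Lam x y η + (lam / (n : ℝ)) * l1norm η) :
    inCone (supp η₀) ((c + 1) / (c - 1)) (ηhat - η₀) := by
  set δ : Fin p → ℝ := ηhat - η₀ with hδ
  have hδj : ∀ j, δ j = ηhat j - η₀ j := fun j => rfl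
  set T : Finset (Fin p) := supp η₀ with hT
  set B : ℝ := gradLamSup x y η₀ with hB
  have hnR : (0 : ℝ) < n := by exact_mod_cast hn
  have hcpos : (0 : ℝ) < c := lt_trans zero_lt_one hc
  -- linearity of xdot
  have hlin : ∀ i, xdot x ηhat i = xdot x η₀ i + xdot x δ i := by
    intro i
    unfold xdot
    rw [← Finset.sum_add_distrib]
    exact Finset.sum_congr rfl fun j _ => by rw [hδj]; ring
  -- swap sums for gradient inner product
  have hswap : ∑ j, gradLam x y η₀ j * δ j
      = (1 / (n : ℝ)) * ∑ i, (logistic (xdot x η₀ i) - y i) * xdot x δ i := by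
    unfold gradLam xdot
    simp only [Finset.sum_mul, Finset.mul_sum]
    rw [Finset.sum_comm]
    exact Finset.sum_congr rfl fun i _ => Finset.sum_congr rfl fun j _ => by ring
  -- convexity (first-order) inequality
  have key : ∑ j, gradLam x y η₀ j * δ j ≤ Lam x y ηhat - Lam x y η₀ := by
    rw [hswap]
    unfold Lam
    rw [← mul_sub, ← Finset.sum_sub_distrib]
    apply mul_le_mul_of_nonneg_left _ (by positivity)
    apply Finset.sum_le_sum
    intro i _
    have ht := softplus_tangent (xdot x η₀ i) (xdot x ηhat i)
    rw [hlin i] at ht ⊢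
    nlinarith [ht]
  -- sup-norm bound on gradient coordinates
  haveI : Nonempty (Fin p) := ⟨⟨0, hp⟩⟩
  have hg : ∀ j, |gradLam x y η₀ j| ≤ B := by
    intro j
    rw [hB, gradLamSup]
    exact le_ciSup (f := fun j => |gradLam x y η₀ j|) (Set.Finite.bddAbove (Set.finite_range _)) j
  have hBnn : 0 ≤ B := le_trans (abs_nonneg _) (hg (Classical.arbitrary _))
  have habs : |∑ j, gradLam x y η₀ j * δ j| ≤ B * l1norm δ := by
    calc |∑ j, gradLam x y η₀ j * δ j| ≤ ∑ j, |gradLam x y η₀ j * δ j| :=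
          Finset.abs_sum_le_sum_abs _ _
      _ ≤ ∑ j, B * |δ j| := Finset.sum_le_sum fun j _ => by
          rw [abs_mul]; exact mul_le_mul_of_nonneg_right (hg j) (abs_nonneg _)
      _ = B * l1norm δ := by rw [l1norm, Finset.mul_sum]
  -- abbreviations
  set A : ℝ := ∑ j ∈ T, |δ j| with hA
  set Bc : ℝ := ∑ j ∈ Tᶜ, |δ j| with hBc
  have hApos : 0 ≤ A := Finset.sum_nonneg fun j _ => abs_nonneg _
  have hBcpos : 0 ≤ Bc := Finset.sum_nonneg fun j _ => abs_nonneg _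
  have hl1δ : l1norm δ = A + Bc := by
    rw [l1norm, ← Finset.sum_add_sum_compl T]
  -- l1 decomposition
  have hη₀c : ∀ j ∈ Tᶜ, η₀ j = 0 := by
    intro j hj
    have := Finset.mem_compl.1 hj
    simp [hT, supp] at this
    exact this
  have hl1diff : l1norm η₀ - l1norm ηhat ≤ A - Bc := by
    have h1 : l1norm η₀ = ∑ j ∈ T, |η₀ j| := by
      rw [l1norm, ← Finset.sum_add_sum_compl T]
      have : ∑ j ∈ Tᶜ, |η₀ j| = 0 :=
        Finset.sum_eq_zero fun j hj => by rw [hη₀c j hj, abs_zero]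
      rw [this, add_zero]
    have h2 : l1norm ηhat = ∑ j ∈ T, |ηhat j| + Bc := by
      rw [l1norm, ← Finset.sum_add_sum_compl T]
      congr 1
      exact Finset.sum_congr rfl fun j hj => by rw [hδj, hη₀c j hj, sub_zero]
    rw [h1, h2, hA]
    have h3 : ∑ j ∈ T, |η₀ j| - ∑ j ∈ T, |ηhat j| ≤ ∑ j ∈ T, |δ j| := by
      rw [← Finset.sum_sub_distrib]
      apply Finset.sum_le_sum
      intro j _
      rw [hδj]
      have := abs_sub_abs_le_abs_sub (η₀ j) (ηhat j)
      rw [abs_sub_comm] at this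
      linarith
    linarith
  -- optimality
  have hopt : Lam x y ηhat - Lam x y η₀ ≤ (lam / n) * (l1norm η₀ - l1norm ηhat) := by
    have := hmin η₀
    nlinarith [this]
  -- combine
  have hchain : -(B * (A + Bc)) ≤ (lam / n) * (A - Bc) := by
    have h1 : -(B * l1norm δ) ≤ ∑ j, gradLam x y η₀ j * δ j := neg_le_of_abs_le habs
    have h2 : (lam / n) * (l1norm η₀ - l1norm ηhat) ≤ (lam / n) * (A - Bc) :=
      mul_le_mul_of_nonneg_left hl1diff (by positivity)
    rw [← hl1δ]
    linarith
  have hLpos : (0 : ℝ) < lam / n := by positivity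
  have hfin : 0 ≤ (lam / n) * ((c + 1) * A - (c - 1) * Bc) := by
    nlinarith [mul_nonneg (sub_nonneg.2 hpen) (add_nonneg hApos hBcpos),
      mul_le_mul_of_nonneg_left hchain (le_of_lt hcpos)]
  have hfin2 : 0 ≤ (c + 1) * A - (c - 1) * Bc := nonneg_of_mul_nonneg_right hfin hLpos
  show Bc ≤ (c + 1) / (c - 1) * A
  rw [div_mul_eq_mul_div, le_div_iff₀ (by linarith)]
  nlinarith [hfin2]
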